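/- In the finite higher abelian quantum double model described below, let ω be a state on B(H) such that ω(A_x⁰) = 1 and ω(B_y⁰) = 1 for all simplices x, y ∈ K (a frustration-free state). Then ω(A_s B_ν) = 1 for every s ∈ Hom^{−1} and every ν ∈ Hom_1. -/

import Mathlib

open ComplexOrder

/-- Transport along an equality of indices. -/
def gcast {G : ℤ → Type*} [∀ j, AddCommGroup (G j)] {a b : ℤ} (h : a = b) :
    G a →+ G b where
  toFun g := h ▸ g
  map_zero' := by subst h; rfl
  map_add' := by subst h; intros; rfl

variable (K : ℕ → Type*) (G : ℤ → Type*) [∀ j, AddCommGroup (G j)]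

/-- A `p`-map: a family of maps `K n → G (n - p)`, i.e. of homomorphisms
`C n →+ G (n - p)` from the free abelian group `C n` on `K n`. -/
def PMap (p : ℤ) : Type _ := ∀ n : ℕ, K n → G ((n : ℤ) - p)

instance (p : ℤ) : AddCommGroup (PMap K G p) :=
  inferInstanceAs (AddCommGroup (∀ n : ℕ, K n → G ((n : ℤ) - p)))

/-- The Pontryagin dual `Ĝ j` of `G j`: characters valued in the circle group. -/
abbrev GHat (j : ℤ) : Type _ := AddChar (G j) Circle

/-- Transport of characters along an equality of indices. -/
noncomputable def gcastHat {G : ℤ → Type*} [∀ j, AddCommGroup (G j)] {a b : ℤ} (h : a = b)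
    (α : GHat G a) : GHat G b :=
  AddChar.compAddMonoidHom α (gcast h.symm)

variable {G} in
/-- The dual differential `∂̂G j : Ĝ j → Ĝ (j+1)`, `α ↦ α ∘ dG (j+1)`. -/
noncomputable def dGHat (dG : ∀ j : ℤ, G j →+ G (j - 1)) (j : ℤ) (α : GHat G j) : GHat G (j + 1) :=
  AddChar.compAddMonoidHom α ((gcast (show j + 1 - 1 = j by ring)).comp (dG (j + 1)))

/-- A dual `p`-map: a family of maps `K n → Ĝ (n - p)`. -/
def DMap (p : ℤ) : Type _ := ∀ n : ℕ, K n → GHat G ((n : ℤ) - p)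

noncomputable instance (p : ℤ) : AddCommGroup (DMap K G p) :=
  inferInstanceAs (AddCommGroup (∀ n : ℕ, K n → GHat G ((n : ℤ) - p)))

variable {K G}

/-- The term `t_{n-1} ∘ ∂_n` of the differential `δ^p` (zero in degree `0`). -/
noncomputable def pmapBdryTerm (ε : ∀ n, K (n + 1) → K n → ℤ) (p : ℤ) (t : PMap K G p) :
    ∀ n : ℕ, K n → G ((n : ℤ) - (p + 1))
  | 0, _ => 0
  | (m + 1), x =>
      gcast (show (m : ℤ) - p = ((m + 1 : ℕ) : ℤ) - (p + 1) by push_cast; ring)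
        (∑ᶠ y : K m, ε m x y • t m y)

/-- The differential `δ^p : Hom(C,G)^p → Hom(C,G)^{p+1}`,
`(δ^p t) n = t (n-1) ∘ ∂ n - (-1)^p ∂G (n - p) ∘ t n`. -/
noncomputable def deltaUp (ε : ∀ n, K (n + 1) → K n → ℤ)
    (dG : ∀ j : ℤ, G j →+ G (j - 1)) (p : ℤ) (t : PMap K G p) : PMap K G (p + 1) :=
  fun n x =>
    pmapBdryTerm ε p t n x -
      (((-1 : ℤˣ) ^ p : ℤˣ) : ℤ) •
        gcast (show (n : ℤ) - p - 1 = (n : ℤ) - (p + 1) by ring)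
          (dG ((n : ℤ) - p) (t n x))

/-- The differential `δ_p : Hom(C,G)_p → Hom(C,G)_{p-1}`,
`(δ_p γ) n = γ (n+1) ∘ ∂̂ (n+1) - (-1)^p ∂̂G (n-p) ∘ γ n`. -/
noncomputable def deltaDown (ε : ∀ n, K (n + 1) → K n → ℤ)
    (dG : ∀ j : ℤ, G j →+ G (j - 1)) (p : ℤ) (γ : DMap K G p) : DMap K G (p - 1) :=
  fun n x =>
    gcastHat (show ((n + 1 : ℕ) : ℤ) - p = (n : ℤ) - (p - 1) by push_cast; ring)
        (∑ᶠ z : K (n + 1), ε n z x • γ (n + 1) z) -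
      (((-1 : ℤˣ) ^ p : ℤˣ) : ℤ) •
        gcastHat (show (n : ℤ) - p + 1 = (n : ℤ) - (p - 1) by ring)
          (dGHat dG ((n : ℤ) - p) (γ n x))

/-- Transport of `p`-maps along an equality of degrees. -/
def pmapCast {p q : ℤ} (h : p = q) (t : PMap K G p) : PMap K G q := h ▸ t

/-- Transport of dual `p`-maps along an equality of degrees. -/
def dmapCast {p q : ℤ} (h : p = q) (γ : DMap K G p) : DMap K G q := h ▸ γ

/-- The pairing `γ(t) = ∏_n ∏_{x ∈ K n} γ n x (t n x) ∈ U(1)` between a dual `p`-map `γ`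
and a `p`-map `t`. -/
noncomputable def pairing (p : ℤ) (γ : DMap K G p) (t : PMap K G p) : Circle :=
  ∏ᶠ (n : ℕ) (x : K n), γ n x (t n x)

/-- The Hilbert space `H = ℓ²(Hom⁰)` of the model, with orthonormal basis indexed by the
configurations `f ∈ Hom⁰ = Hom(C,G)⁰`. -/
abbrev QdmSpace (K : ℕ → Type*) (G : ℤ → Type*) [∀ j, AddCommGroup (G j)] : Type _ :=
  EuclideanSpace ℂ (PMap K G 0)

section Operators

variable [Fintype (PMap K G 0)]

/-- The shift operator `P_t`, `P_t |f⟩ = |t + f⟩`. -/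
noncomputable def Pop (t : PMap K G 0) : QdmSpace K G →L[ℂ] QdmSpace K G :=
  LinearMap.toContinuousLinearMap
    { toFun := fun ψ => (WithLp.toLp 2 (fun f => ψ (f - t)) : QdmSpace K G)
      map_add' := fun _ _ => rfl
      map_smul' := fun _ _ => rfl }

/-- The clock operator `Q_γ`, `Q_γ |f⟩ = γ(f) |f⟩`. -/
noncomputable def Qop (γ : DMap K G 0) : QdmSpace K G →L[ℂ] QdmSpace K G :=
  LinearMap.toContinuousLinearMap
    { toFun := fun ψ => (WithLp.toLp 2 (fun f => (pairing 0 γ f : ℂ) * ψ f) : QdmSpace K G)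
      map_add' := fun ψ φ => by ext f; simp [mul_add]
      map_smul' := fun c ψ => by ext f; simp [mul_comm, mul_assoc, mul_left_comm] }

variable (ε : ∀ n, K (n + 1) → K n → ℤ) (dG : ∀ j : ℤ, G j →+ G (j - 1))

/-- The operator `A_s = P_{δ^{-1} s}` for `s ∈ Hom(C,G)^{-1}`. -/
noncomputable def Aop (s : PMap K G (-1)) : QdmSpace K G →L[ℂ] QdmSpace K G :=
  Pop (pmapCast (show (-1 : ℤ) + 1 = 0 by norm_num) (deltaUp ε dG (-1) s))

/-- The operator `B_ν = Q_{δ_1 ν}` for `ν ∈ Hom(C,G)_1`. -/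
noncomputable def Bop (ν : DMap K G 1) : QdmSpace K G →L[ℂ] QdmSpace K G :=
  Qop (dmapCast (show (1 : ℤ) - 1 = 0 by norm_num) (deltaDown ε dG 1 ν))

open scoped Classical in
/-- The localized `(-1)`-map `x*_g`: value `g` at the simplex `x` and `0` elsewhere. -/
noncomputable def singleP {n : ℕ} (x : K n) (g : G ((n : ℤ) - (-1))) : PMap K G (-1) :=
  fun m y => if h : ∃ hm : m = n, HEq y x then gcast (by rw [h.choose]) g else 0

open scoped Classical in
/-- The localized dual `1`-map `x_*^χ`: value `χ` at the simplex `x`, trivial elsewhere. -/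
noncomputable def singleD {n : ℕ} (x : K n) (χ : GHat G ((n : ℤ) - 1)) : DMap K G 1 :=
  fun m y => if h : ∃ hm : m = n, HEq y x then gcastHat (by rw [h.choose]) χ else 1

variable [∀ j, Fintype (G j)] [∀ j, Fintype (GHat G j)]

/-- The generalized star operator
`A_x⁰ = |G_{n+1}|⁻¹ ∑_{g ∈ G_{n+1}} A_{x*_g}` for `x ∈ K n`. -/
noncomputable def Astar {n : ℕ} (x : K n) : QdmSpace K G →L[ℂ] QdmSpace K G :=
  (Fintype.card (G ((n : ℤ) - (-1))) : ℂ)⁻¹ •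
    ∑ g : G ((n : ℤ) - (-1)), Aop ε dG (singleP x g)

/-- The generalized plaquette operator
`B_x⁰ = |G_{n-1}|⁻¹ ∑_{χ ∈ Ĝ_{n-1}} B_{x_*^χ}` for `x ∈ K n`. -/
noncomputable def Bplaq {n : ℕ} (x : K n) : QdmSpace K G →L[ℂ] QdmSpace K G :=
  (Fintype.card (G ((n : ℤ) - 1)) : ℂ)⁻¹ •
    ∑ χ : GHat G ((n : ℤ) - 1), Bop ε dG (singleD x χ)

end Operators

section StateLemmas

variable {A : Type*} [Ring A] [StarRing A] [Algebra ℂ A] [StarModule ℂ A]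
variable (ω : A →ₗ[ℂ] ℂ)

/-- A positive functional is hermitian. -/
theorem omega_star_eq (hpos : ∀ T : A, 0 ≤ ω (star T * T)) (T : A) :
    ω (star T) = starRingEnd ℂ (ω T) := by
  have him : ∀ S : A, (ω (star S * S)).im = 0 := fun S => ((Complex.le_def.mp (hpos S)).2).symm
  have h1 := him (T + 1)
  have h2 := him (T + Complex.I • 1)
  have hTT := him T
  have h1' := him (1 : A)
  rw [star_one, one_mul] at h1'
  simp only [star_add, star_smul, star_one, Complex.star_def, Complex.conj_I, add_mul,
    mul_add, smul_mul_assoc, mul_smul_comm, smul_smul, mul_one, one_mul, neg_smul, neg_mul,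
    Complex.I_mul_I, neg_neg, one_smul, map_add, map_smul, map_neg, smul_eq_mul,
    Complex.add_im, Complex.neg_im, Complex.mul_im, Complex.add_re, Complex.neg_re, Complex.mul_re, Complex.I_re, Complex.I_im,
    hTT, h1'] at h1 h2
  apply Complex.ext
  · simp only [Complex.conj_re]; linarith
  · simp only [Complex.conj_im]; linarith

end StateLemmas

section StateLemmas2

variable {A : Type*} [Ring A] [StarRing A] [Algebra ℂ A] [StarModule ℂ A]
variable (ω : A →ₗ[ℂ] ℂ) (hpos : ∀ T : A, 0 ≤ ω (star T * T))
include hpos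

/-- Degenerate Cauchy–Schwarz. -/
theorem omega_cs_zero {X : A} (hX : ω (star X * X) = 0) (Y : A) :
    ω (star X * Y) = 0 := by
  set a := ω (star X * Y) with ha
  by_contra hne
  have hyx : ω (star Y * X) = starRingEnd ℂ a := by
    have h := omega_star_eq ω hpos (star X * Y)
    rwa [star_mul, star_star] at h
  have key : ∀ t : ℝ, 0 ≤ (ω (star Y * Y)).re - 2 * t * Complex.normSq a := by
    intro t
    have h := (Complex.le_def.mp (hpos (Y + (-(t : ℂ) * a) • X))).1
    simp only [star_add, star_smul, add_mul, mul_add, smul_mul_assoc, mul_smul_comm,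
      smul_smul, map_add, map_smul, smul_eq_mul, hX, mul_zero, hyx, ← ha,
      add_zero] at h
    have h2 : (star (-(t:ℂ) * a) * a + -(t:ℂ) * a * starRingEnd ℂ a)
        = ((-(2 * t * Complex.normSq a) : ℝ) : ℂ) := by
      simp only [Complex.star_def, map_mul, map_neg, Complex.conj_ofReal]
      rw [mul_assoc, mul_assoc, ← Complex.normSq_eq_conj_mul_self, Complex.mul_conj]
      push_cast; ring
    rw [add_assoc, h2, Complex.add_re, Complex.ofReal_re, Complex.zero_re] at h
    linarith
  have hns : 0 < Complex.normSq a := Complex.normSq_pos.mpr hne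
  have h4 := key (((ω (star Y * Y)).re + 1) / (2 * Complex.normSq a))
  have heq : 2 * (((ω (star Y * Y)).re + 1) / (2 * Complex.normSq a)) * Complex.normSq a
      = (ω (star Y * Y)).re + 1 := by
    field_simp
  rw [heq] at h4
  linarith

/-- For a unitary, `|ω U|² ≤ 1`. -/
theorem omega_unitary_normSq_le (hone : ω 1 = 1) {U : A} (hU : star U * U = 1) :
    Complex.normSq (ω U) ≤ 1 := by
  set z := ω U with hz
  have hsU : ω (star U) = starRingEnd ℂ z := omega_star_eq ω hpos U
  have h := (Complex.le_def.mp (hpos (1 + (-(starRingEnd ℂ z)) • U))).1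
  simp only [star_add, star_one, star_smul, add_mul, mul_add, one_mul, mul_one,
    smul_mul_assoc, mul_smul_comm, smul_smul, hU, map_add, map_smul, smul_eq_mul,
    hone, hsU, ← hz, star_neg, Complex.star_def, map_neg, RingHomCompTriple.comp_apply,
    Complex.conj_conj, mul_one] at h
  simp only [RingHom.id_apply, Complex.add_re, Complex.neg_re, Complex.mul_re,
    Complex.one_re, Complex.one_im, Complex.conj_re, Complex.conj_im, Complex.neg_im,
    Complex.zero_re] at h
  rw [Complex.normSq_apply]
  nlinarith [h]

/-- Closure: product of two "ω-certain" unitaries. -/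
theorem omega_mul_eq_one (hone : ω 1 = 1) {U V : A}
    (hU : star U * U = 1) (hU' : U * star U = 1)
    (hωU : ω U = 1) (hωV : ω V = 1) : ω (U * V) = 1 := by
  have hsU : ω (star U) = 1 := by
    rw [omega_star_eq ω hpos, hωU, map_one]
  have hX : ω (star (star U - 1) * (star U - 1)) = 0 := by
    have hexp : star (star U - 1) * (star U - 1) = U * star U - U - star U + 1 := by
      rw [star_sub, star_star, star_one]; noncomm_ring
    rw [hexp, hU']
    simp only [map_add, map_sub, hone, hωU, hsU]
    ring
  have h0 := omega_cs_zero ω hpos hX V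
  rw [star_sub, star_star, star_one, sub_mul, one_mul, map_sub, hωV] at h0
  linear_combination h0

/-- Averaging: if the mean of unitaries has `ω = 1`, each has `ω = 1`. -/
theorem omega_avg {ι : Type*} [Fintype ι] [Nonempty ι] (hone : ω 1 = 1) (U : ι → A)
    (hU : ∀ i, star (U i) * U i = 1)
    (havg : ω ((Fintype.card ι : ℂ)⁻¹ • ∑ i, U i) = 1) (i : ι) : ω (U i) = 1 := by
  classical
  have hcard : (Fintype.card ι : ℂ) ≠ 0 := by
    exact_mod_cast Nat.cast_ne_zero.mpr Fintype.card_ne_zero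
  rw [map_smul, map_sum, smul_eq_mul, inv_mul_eq_one₀ hcard] at havg
  have hre : ∀ j, (ω (U j)).re ≤ 1 := by
    intro j
    have h := omega_unitary_normSq_le ω hpos hone (hU j)
    have := Complex.normSq_apply (ω (U j))
    nlinarith [sq_nonneg ((ω (U j)).re - 1), sq_nonneg (ω (U j)).im]
  have hsumre : ∑ j, (ω (U j)).re = Fintype.card ι := by
    have h5 := congrArg Complex.re havg
    simp only [Complex.re_sum, Complex.natCast_re] at h5
    linarith [h5]
  have hzero : ∑ j : ι, (1 - (ω (U j)).re) = 0 := by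
    rw [Finset.sum_sub_distrib, hsumre]
    simp
  have hall := (Finset.sum_eq_zero_iff_of_nonneg
    (fun j _ => by linarith [hre j])).mp hzero i (Finset.mem_univ i)
  have hre1 : (ω (U i)).re = 1 := by linarith
  have hns := omega_unitary_normSq_le ω hpos hone (hU i)
  rw [Complex.normSq_apply, hre1] at hns
  have him : (ω (U i)).im = 0 := by nlinarith [sq_nonneg (ω (U i)).im]
  apply Complex.ext <;> simp [hre1, him]

end StateLemmas2


section OpLemmas

variable {K : ℕ → Type*} {G : ℤ → Type*} [∀ j, AddCommGroup (G j)]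

theorem pmapCast_add {p q : ℤ} (h : p = q) (t t' : PMap K G p) :
    pmapCast h (t + t') = pmapCast h t + pmapCast h t' := by subst h; rfl

theorem dmapCast_add {p q : ℤ} (h : p = q) (γ γ' : DMap K G p) :
    dmapCast h (γ + γ') = dmapCast h γ + dmapCast h γ' := by subst h; rfl

/-- Evaluation of a `PMap` as an additive monoid hom. -/
def pevalHom (p : ℤ) (m : ℕ) (y : K m) : PMap K G p →+ G ((m : ℤ) - p) where
  toFun t := t m y
  map_zero' := rfl
  map_add' _ _ := rfl

/-- Evaluation of a `DMap` as an additive monoid hom. -/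
def devalHom (p : ℤ) (m : ℕ) (y : K m) : DMap K G p →+ GHat G ((m : ℤ) - p) where
  toFun γ := γ m y
  map_zero' := rfl
  map_add' _ _ := rfl

theorem pmap_sum_apply {ι : Type*} (p : ℤ) (S : Finset ι) (F : ι → PMap K G p)
    (m : ℕ) (y : K m) : (∑ i ∈ S, F i) m y = ∑ i ∈ S, F i m y :=
  map_sum (pevalHom p m y) F S

theorem dmap_sum_apply {ι : Type*} (p : ℤ) (S : Finset ι) (F : ι → DMap K G p)
    (m : ℕ) (y : K m) : (∑ i ∈ S, F i) m y = ∑ i ∈ S, F i m y :=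
  map_sum (devalHom p m y) F S

section WithFin

variable [∀ n, Fintype (K n)]

theorem pmapBdryTerm_add (ε : ∀ n, K (n + 1) → K n → ℤ) (p : ℤ) (t t' : PMap K G p)
    (n : ℕ) (x : K n) :
    pmapBdryTerm ε p (t + t') n x = pmapBdryTerm ε p t n x + pmapBdryTerm ε p t' n x := by
  cases n with
  | zero => simp [pmapBdryTerm]
  | succ m =>
    show gcast _ _ = gcast _ _ + gcast _ _
    rw [← map_add]
    congr 1
    rw [finsum_eq_sum_of_fintype, finsum_eq_sum_of_fintype, finsum_eq_sum_of_fintype,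
      ← Finset.sum_add_distrib]
    refine Finset.sum_congr rfl fun y _ => ?_
    show ε m x y • (t m y + t' m y) = _
    rw [smul_add]

theorem deltaUp_add (ε : ∀ n, K (n + 1) → K n → ℤ) (dG : ∀ j : ℤ, G j →+ G (j - 1))
    (p : ℤ) (t t' : PMap K G p) :
    deltaUp ε dG p (t + t') = deltaUp ε dG p t + deltaUp ε dG p t' := by
  funext n x
  show deltaUp ε dG p (t + t') n x = deltaUp ε dG p t n x + deltaUp ε dG p t' n x
  unfold deltaUp
  rw [pmapBdryTerm_add]
  have : (t + t') n x = t n x + t' n x := rfl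
  rw [this, map_add, map_add, smul_add]
  abel


theorem addChar_zsmul_add {A : Type*} [AddCommGroup A] (c : ℤ) (α β : AddChar A Circle) :
    c • (α + β) = c • α + c • β := by
  ext a
  simp only [AddChar.zsmul_apply, AddChar.add_apply, mul_zpow]

theorem gcastHat_add {a b : ℤ} (h : a = b) (α β : GHat G a) :
    gcastHat h (α + β) = gcastHat h α + gcastHat h β := rfl

theorem dGHat_add (dG : ∀ j : ℤ, G j →+ G (j - 1)) (j : ℤ) (α β : GHat G j) :
    dGHat dG j (α + β) = dGHat dG j α + dGHat dG j β := rfl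

theorem deltaDown_add (ε : ∀ n, K (n + 1) → K n → ℤ) (dG : ∀ j : ℤ, G j →+ G (j - 1))
    (p : ℤ) (γ γ' : DMap K G p) :
    deltaDown ε dG p (γ + γ') = deltaDown ε dG p γ + deltaDown ε dG p γ' := by
  funext n x
  show deltaDown ε dG p (γ + γ') n x = deltaDown ε dG p γ n x + deltaDown ε dG p γ' n x
  unfold deltaDown
  have h1 : (∑ᶠ z : K (n + 1), ε n z x • (γ + γ') (n + 1) z)
      = (∑ᶠ z : K (n + 1), ε n z x • γ (n + 1) z)
        + (∑ᶠ z : K (n + 1), ε n z x • γ' (n + 1) z) := by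
    rw [finsum_eq_sum_of_fintype, finsum_eq_sum_of_fintype, finsum_eq_sum_of_fintype,
      ← Finset.sum_add_distrib]
    refine Finset.sum_congr rfl fun z _ => ?_
    show ε n z x • (γ (n + 1) z + γ' (n + 1) z) = _
    rw [addChar_zsmul_add]
  have h2 : (γ + γ') n x = γ n x + γ' n x := rfl
  rw [h1, h2, gcastHat_add, dGHat_add, gcastHat_add, addChar_zsmul_add]
  abel

end WithFin

section Single

variable [∀ n, Fintype (K n)]

open scoped Classical in
theorem singleP_apply_self {n : ℕ} (x y : K n) (g : G ((n : ℤ) - (-1))) :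
    singleP (K := K) x g n y = if y = x then g else 0 := by
  unfold singleP
  by_cases h : y = x
  · subst h
    rw [dif_pos ⟨rfl, HEq.rfl⟩, if_pos rfl]
    rfl
  · rw [dif_neg, if_neg h]
    rintro ⟨-, hh⟩
    exact h (eq_of_heq hh)

open scoped Classical in
theorem singleP_apply_ne {n m : ℕ} (hnm : m ≠ n) (x : K n) (g : G ((n : ℤ) - (-1)))
    (y : K m) : singleP (K := K) x g m y = 0 := by
  unfold singleP
  rw [dif_neg]
  rintro ⟨h, -⟩
  exact hnm h

open scoped Classical in
theorem singleD_apply_self {n : ℕ} (x y : K n) (χ : GHat G ((n : ℤ) - 1)) :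
    singleD (K := K) x χ n y = if y = x then χ else 0 := by
  unfold singleD
  by_cases h : y = x
  · subst h
    rw [dif_pos ⟨rfl, HEq.rfl⟩, if_pos rfl]
    rfl
  · rw [dif_neg, if_neg h]
    · exact AddChar.one_eq_zero
    · rintro ⟨-, hh⟩
      exact h (eq_of_heq hh)

open scoped Classical in
theorem singleD_apply_ne {n m : ℕ} (hnm : m ≠ n) (x : K n) (χ : GHat G ((n : ℤ) - 1))
    (y : K m) : singleD (K := K) x χ m y = 0 := by
  unfold singleD
  rw [dif_neg]
  · exact AddChar.one_eq_zero
  · rintro ⟨h, -⟩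
    exact hnm h

theorem pmap_decomp (N : ℕ) (hdim : ∀ n : ℕ, N < n → IsEmpty (K n))
    (s : PMap K G (-1)) :
    s = ∑ n ∈ Finset.range (N + 1), ∑ x : K n, singleP x (s n x) := by
  classical
  funext m y
  rw [pmap_sum_apply]
  by_cases hm : m < N + 1
  · rw [Finset.sum_eq_single_of_mem m (Finset.mem_range.mpr hm)]
    · rw [pmap_sum_apply]
      simp [singleP_apply_self]
    · intro n _ hne
      rw [pmap_sum_apply]
      exact Finset.sum_eq_zero fun x _ => singleP_apply_ne (Ne.symm hne) x _ y
  · exact ((hdim m (by omega)).false y).elim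

theorem dmap_decomp (N : ℕ) (hdim : ∀ n : ℕ, N < n → IsEmpty (K n))
    (ν : DMap K G 1) :
    ν = ∑ n ∈ Finset.range (N + 1), ∑ x : K n, singleD x (ν n x) := by
  classical
  funext m y
  rw [dmap_sum_apply]
  by_cases hm : m < N + 1
  · rw [Finset.sum_eq_single_of_mem m (Finset.mem_range.mpr hm)]
    · rw [dmap_sum_apply]
      simp [singleD_apply_self]
    · intro n _ hne
      rw [dmap_sum_apply]
      exact Finset.sum_eq_zero fun x _ => singleD_apply_ne (Ne.symm hne) x _ y
  · exact ((hdim m (by omega)).false y).elim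

end Single

section PQ

variable [Fintype (PMap K G 0)]

theorem Pop_apply (t : PMap K G 0) (ψ : QdmSpace K G) (f : PMap K G 0) :
    Pop t ψ f = ψ (f - t) := by
  simp [Pop]
  rfl

theorem Pop_mul (t t' : PMap K G 0) : Pop (K := K) (G := G) (t + t') = Pop t * Pop t' := by
  refine ContinuousLinearMap.ext fun ψ => PiLp.ext fun f => ?_
  rw [ContinuousLinearMap.mul_apply, Pop_apply, Pop_apply, Pop_apply, sub_sub]

theorem Pop_zero : Pop (K := K) (G := G) 0 = 1 := by
  refine ContinuousLinearMap.ext fun ψ => PiLp.ext fun f => ?_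
  rw [Pop_apply, sub_zero]
  rfl

theorem star_Pop (t : PMap K G 0) : star (Pop (K := K) (G := G) t) = Pop (-t) := by
  have h : Pop (K := K) (G := G) (-t) = ContinuousLinearMap.adjoint (Pop t) := by
    rw [ContinuousLinearMap.eq_adjoint_iff]
    intro ψ φ
    simp only [PiLp.inner_apply, RCLike.inner_apply, Pop_apply]
    refine Fintype.sum_equiv (Equiv.addRight t) _ _ fun f => ?_
    rw [Equiv.coe_addRight, sub_neg_eq_add, add_sub_cancel_right]
  rw [ContinuousLinearMap.star_eq_adjoint, ← h]

theorem Pop_unitary (t : PMap K G 0) :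
    star (Pop (K := K) (G := G) t) * Pop t = 1 ∧ Pop t * star (Pop (K := K) (G := G) t) = 1 := by
  rw [star_Pop]
  constructor
  · rw [← Pop_mul, neg_add_cancel, Pop_zero]
  · rw [← Pop_mul, add_neg_cancel, Pop_zero]

variable (N : ℕ) [∀ n, Fintype (K n)]

theorem pairing_eq_prod (hdim : ∀ n : ℕ, N < n → IsEmpty (K n))
    (p : ℤ) (γ : DMap K G p) (f : PMap K G p) :
    pairing p γ f = ∏ n ∈ Finset.range (N + 1), ∏ x : K n, γ n x (f n x) := by
  unfold pairing
  have h1 : ∀ n : ℕ, (∏ᶠ x : K n, γ n x (f n x)) = ∏ x : K n, γ n x (f n x) :=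
    fun n => finprod_eq_prod_of_fintype _
  rw [finprod_congr h1]
  refine finprod_eq_prod_of_mulSupport_subset _ ?_
  intro n hn
  simp only [Finset.coe_range, Set.mem_Iio]
  by_contra hlt
  apply hn
  have : IsEmpty (K n) := hdim n (by omega)
  simp [Finset.univ_eq_empty]

theorem pairing_add (hdim : ∀ n : ℕ, N < n → IsEmpty (K n)) (γ γ' : DMap K G 0)
    (f : PMap K G 0) :
    (pairing 0 (γ + γ') f : Circle) = pairing 0 γ f * pairing 0 γ' f := by
  rw [pairing_eq_prod N hdim, pairing_eq_prod N hdim, pairing_eq_prod N hdim,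
    ← Finset.prod_mul_distrib]
  refine Finset.prod_congr rfl fun n _ => ?_
  rw [← Finset.prod_mul_distrib]
  refine Finset.prod_congr rfl fun x _ => ?_
  show ((γ n x + γ' n x) (f n x) : Circle) = _
  rw [AddChar.add_apply]

theorem pairing_zero (f : PMap K G 0) : pairing (K := K) (G := G) 0 0 f = 1 := by
  unfold pairing
  have h1 : ∀ n : ℕ, (∏ᶠ x : K n, (0 : DMap K G 0) n x (f n x)) = 1 := by
    intro n
    have : ∀ x : K n, (0 : DMap K G 0) n x (f n x) = 1 := fun x => rfl
    rw [finprod_congr this, finprod_one]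
  rw [finprod_congr h1, finprod_one]

theorem pairing_neg (γ : DMap K G 0) (f : PMap K G 0) :
    pairing 0 (-γ) f = (pairing 0 γ f)⁻¹ := by
  unfold pairing
  rw [← finprod_inv_distrib]
  refine finprod_congr fun n => ?_
  rw [← finprod_inv_distrib]
  refine finprod_congr fun x => ?_
  show ((-(γ n x)) (f n x) : Circle) = _
  rw [AddChar.neg_apply']

theorem Qop_apply (γ : DMap K G 0) (ψ : QdmSpace K G) (f : PMap K G 0) :
    Qop γ ψ f = (pairing 0 γ f : ℂ) * ψ f := by
  simp [Qop]

theorem Qop_mul (hdim : ∀ n : ℕ, N < n → IsEmpty (K n)) (γ γ' : DMap K G 0) :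
    Qop (K := K) (G := G) (γ + γ') = Qop γ * Qop γ' := by
  refine ContinuousLinearMap.ext fun ψ => PiLp.ext fun f => ?_
  rw [ContinuousLinearMap.mul_apply, Qop_apply, Qop_apply, Qop_apply,
    pairing_add N hdim]
  push_cast
  ring

theorem Qop_zero : Qop (K := K) (G := G) 0 = 1 := by
  refine ContinuousLinearMap.ext fun ψ => PiLp.ext fun f => ?_
  rw [Qop_apply, pairing_zero]
  simp

theorem star_Qop (γ : DMap K G 0) : star (Qop (K := K) (G := G) γ) = Qop (-γ) := by
  have h : Qop (K := K) (G := G) (-γ) = ContinuousLinearMap.adjoint (Qop γ) := by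
    rw [ContinuousLinearMap.eq_adjoint_iff]
    intro ψ φ
    simp only [PiLp.inner_apply, RCLike.inner_apply, Qop_apply]
    refine Finset.sum_congr rfl fun f _ => ?_
    rw [pairing_neg]
    rw [map_mul]
    have hconj : (starRingEnd ℂ) (((pairing 0 γ f)⁻¹ : Circle) : ℂ) = (pairing 0 γ f : ℂ) := by
      rw [Circle.coe_inv_eq_conj, Complex.conj_conj]
    rw [hconj]
    ring
  rw [ContinuousLinearMap.star_eq_adjoint, ← h]

theorem Qop_unitary (hdim : ∀ n : ℕ, N < n → IsEmpty (K n)) (γ : DMap K G 0) :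
    star (Qop (K := K) (G := G) γ) * Qop γ = 1 ∧
      Qop γ * star (Qop (K := K) (G := G) γ) = 1 := by
  rw [star_Qop]
  constructor
  · rw [← Qop_mul N hdim, neg_add_cancel, Qop_zero]
  · rw [← Qop_mul N hdim, add_neg_cancel, Qop_zero]

end PQ

end OpLemmas


theorem card_ghat {G : ℤ → Type*} [∀ j, AddCommGroup (G j)] (j : ℤ)
    [Fintype (G j)] [Fintype (GHat G j)] :
    Fintype.card (GHat G j) = Fintype.card (G j) := by
  classical
  have e := (AddChar.circleEquivComplex (α := G j)).toEquiv
  letI : Fintype (AddChar (G j) ℂ) := Fintype.ofEquiv _ e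
  rw [Fintype.card_congr e]
  convert AddChar.card_eq (α := G j) using 2

/-- a frustration-free state (a state with `ω (A_x⁰) = ω (B_y⁰) = 1`
for all simplices `x, y`) satisfies `ω (A_s B_ν) = 1` for all `s ∈ Hom^{-1}`,
`ν ∈ Hom_1`. -/
theorem frustrationFree_state_eval_AB_eq_one (N : ℕ)
    {K : ℕ → Type*} [∀ n, Fintype (K n)] {G : ℤ → Type*} [∀ j, AddCommGroup (G j)]
    [∀ j, Fintype (G j)] [∀ j, Fintype (GHat G j)] [Fintype (PMap K G 0)]
    (ε : ∀ n, K (n + 1) → K n → ℤ) (dG : ∀ j : ℤ, G j →+ G (j - 1))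
    (hdim : ∀ n : ℕ, N < n → IsEmpty (K n))
    (hGtriv : ∀ j : ℤ, (j < 0 ∨ (N : ℤ) < j) → Subsingleton (G j))
    (hεval : ∀ n (x : K (n + 1)) (y : K n), ε n x y = -1 ∨ ε n x y = 0 ∨ ε n x y = 1)
    (hεε : ∀ n (x : K (n + 2)) (w : K n), ∑ y : K (n + 1), ε (n + 1) x y * ε n y w = 0)
    (hdG : ∀ j : ℤ, (dG (j - 1)).comp (dG j) = 0)
    (ω : (QdmSpace K G →L[ℂ] QdmSpace K G) →ₗ[ℂ] ℂ)
    (hpos : ∀ T : QdmSpace K G →L[ℂ] QdmSpace K G, 0 ≤ ω (star T * T))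
    (hone : ω 1 = 1)
    (hffA : ∀ (n : ℕ) (x : K n), ω (Astar ε dG x) = 1)
    (hffB : ∀ (m : ℕ) (y : K m), ω (Bplaq ε dG y) = 1)
    (s : PMap K G (-1)) (ν : DMap K G 1) :
    ω (Aop ε dG s * Bop ε dG ν) = 1 := by
  classical
  -- unitarity of the elementary operators
  have hAunit : ∀ s' : PMap K G (-1),
      star (Aop ε dG s') * Aop ε dG s' = 1 ∧ Aop ε dG s' * star (Aop ε dG s') = 1 :=
    fun s' => Pop_unitary _
  have hBunit : ∀ ν' : DMap K G 1,
      star (Bop ε dG ν') * Bop ε dG ν' = 1 ∧ Bop ε dG ν' * star (Bop ε dG ν') = 1 :=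
    fun ν' => Qop_unitary N hdim _
  have hAmul : ∀ s₁ s₂ : PMap K G (-1),
      Aop ε dG (s₁ + s₂) = Aop ε dG s₁ * Aop ε dG s₂ := by
    intro s₁ s₂
    unfold Aop
    rw [deltaUp_add, pmapCast_add, Pop_mul]
  have hBmul : ∀ ν₁ ν₂ : DMap K G 1,
      Bop ε dG (ν₁ + ν₂) = Bop ε dG ν₁ * Bop ε dG ν₂ := by
    intro ν₁ ν₂
    unfold Bop
    rw [deltaDown_add, dmapCast_add, Qop_mul N hdim]
  have hAzero : Aop ε dG (0 : PMap K G (-1)) = 1 := by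
    have h := hAmul 0 0
    rw [add_zero] at h
    have hu := (hAunit 0).1
    calc Aop ε dG 0 = 1 * Aop ε dG 0 := (one_mul _).symm
    _ = star (Aop ε dG 0) * Aop ε dG 0 * Aop ε dG 0 := by rw [hu]
    _ = star (Aop ε dG 0) * (Aop ε dG 0 * Aop ε dG 0) := by rw [mul_assoc]
    _ = star (Aop ε dG 0) * Aop ε dG 0 := by rw [← h]
    _ = 1 := hu
  have hBzero : Bop ε dG (0 : DMap K G 1) = 1 := by
    have h := hBmul 0 0
    rw [add_zero] at h
    have hu := (hBunit 0).1
    calc Bop ε dG 0 = 1 * Bop ε dG 0 := (one_mul _).symm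
    _ = star (Bop ε dG 0) * Bop ε dG 0 * Bop ε dG 0 := by rw [hu]
    _ = star (Bop ε dG 0) * (Bop ε dG 0 * Bop ε dG 0) := by rw [mul_assoc]
    _ = star (Bop ε dG 0) * Bop ε dG 0 := by rw [← h]
    _ = 1 := hu
  have hAadd : ∀ s₁ s₂ : PMap K G (-1), ω (Aop ε dG s₁) = 1 → ω (Aop ε dG s₂) = 1 →
      ω (Aop ε dG (s₁ + s₂)) = 1 := by
    intro s₁ s₂ h₁ h₂
    rw [hAmul]
    exact omega_mul_eq_one ω hpos hone (hAunit s₁).1 (hAunit s₁).2 h₁ h₂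
  have hBadd : ∀ ν₁ ν₂ : DMap K G 1, ω (Bop ε dG ν₁) = 1 → ω (Bop ε dG ν₂) = 1 →
      ω (Bop ε dG (ν₁ + ν₂)) = 1 := by
    intro ν₁ ν₂ h₁ h₂
    rw [hBmul]
    exact omega_mul_eq_one ω hpos hone (hBunit ν₁).1 (hBunit ν₁).2 h₁ h₂
  have hAsingle : ∀ (n : ℕ) (x : K n) (g : G ((n : ℤ) - (-1))),
      ω (Aop ε dG (singleP x g)) = 1 := by
    intro n x g
    have : Nonempty (G ((n : ℤ) - (-1))) := ⟨0⟩
    exact omega_avg ω hpos hone (fun g => Aop ε dG (singleP x g))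
      (fun g => (hAunit _).1) (hffA n x) g
  have hBsingle : ∀ (n : ℕ) (x : K n) (χ : GHat G ((n : ℤ) - 1)),
      ω (Bop ε dG (singleD x χ)) = 1 := by
    intro n x χ
    have : Nonempty (GHat G ((n : ℤ) - 1)) := ⟨0⟩
    have havg : ω ((Fintype.card (GHat G ((n : ℤ) - 1)) : ℂ)⁻¹ •
        ∑ χ' : GHat G ((n : ℤ) - 1), Bop ε dG (singleD x χ')) = 1 := by
      rw [card_ghat]
      exact hffB n x
    exact omega_avg ω hpos hone (fun χ' => Bop ε dG (singleD x χ'))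
      (fun χ' => (hBunit _).1) havg χ
  have hA1 : ω (Aop ε dG s) = 1 := by
    conv_lhs => rw [pmap_decomp N hdim s]
    refine Finset.sum_induction _ (fun s' : PMap K G (-1) => ω (Aop ε dG s') = 1)
      hAadd (by show ω (Aop ε dG (0 : PMap K G (-1))) = 1; rw [hAzero]; exact hone) ?_
    intro n _
    refine Finset.sum_induction _ (fun s' : PMap K G (-1) => ω (Aop ε dG s') = 1)
      hAadd (by show ω (Aop ε dG (0 : PMap K G (-1))) = 1; rw [hAzero]; exact hone) ?_
    intro x _
    exact hAsingle n x _
  have hB1 : ω (Bop ε dG ν) = 1 := by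
    conv_lhs => rw [dmap_decomp N hdim ν]
    refine Finset.sum_induction _ (fun ν' : DMap K G 1 => ω (Bop ε dG ν') = 1)
      hBadd (by show ω (Bop ε dG (0 : DMap K G 1)) = 1; rw [hBzero]; exact hone) ?_
    intro n _
    refine Finset.sum_induction _ (fun ν' : DMap K G 1 => ω (Bop ε dG ν') = 1)
      hBadd (by show ω (Bop ε dG (0 : DMap K G 1)) = 1; rw [hBzero]; exact hone) ?_
    intro x _
    exact hBsingle n x _
  exact omega_mul_eq_one ω hpos hone (hAunit s).1 (hAunit s).2 hA1 hB1
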